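/- Let γ > 0, c ∈ ℝ^d with c ≠ 0, and let f : ℝ^d → ℝ be twice continuously differentiable on a neighborhood of ω* ∈ ℝ^d with f(ω*) = 0, ∇f(ω*) ≠ 0, and c = μ·∇f(ω*) for some μ > 0. On the neighborhood of ω* where ‖∇f(ω)‖² − 2γf(ω) > 0, define F(ω) = ω + (1/γ)·[ (√(‖∇f(ω)‖² − 2γf(ω)) / ‖c‖)·c − ∇f(ω) ]. Then F is differentiable at ω*, and its derivative at ω* is the linear map J = (I − u·uᵀ)∘(I − (1/γ)·∇²f(ω*)), where u = ∇f(ω*)/‖∇f(ω*)‖ and ∇²f(ω*) is the Hessian of f at ω*; that is, J·p = w − ⟨u,w⟩·u with w = p − (1/γ)·∇²f(ω*)·p. -/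

import Mathlib

open scoped RealInnerProductSpace

/-- **Jacobian of the fixed-point iteration map at a local maximizer.** If `f(ω*) = 0`,
`∇f(ω*) ≠ 0` and `c = μ∇f(ω*)` with `μ > 0`, then the iteration map
`F(ω) = ω + (1/γ)[(√(‖∇f(ω)‖² − 2γf(ω))/‖c‖)c − ∇f(ω)]` is differentiable at `ω*` with
derivative `J = (I − uuᵀ)(I − ∇²f(ω*)/γ)`, where `u = ∇f(ω*)/‖∇f(ω*)‖`. -/
theorem stmt_10 {d : ℕ} (γ : ℝ) (hγ : 0 < γ)
    (c : EuclideanSpace ℝ (Fin d)) (hc : c ≠ 0)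
    (f : EuclideanSpace ℝ (Fin d) → ℝ) (ωs : EuclideanSpace ℝ (Fin d))
    (hf : ∃ U ∈ nhds ωs, ContDiffOn ℝ 2 f U)
    (h0 : f ωs = 0) (hg : gradient f ωs ≠ 0)
    (μ : ℝ) (hμ : 0 < μ) (hcμ : c = μ • gradient f ωs)
    (F : EuclideanSpace ℝ (Fin d) → EuclideanSpace ℝ (Fin d))
    (U : Set (EuclideanSpace ℝ (Fin d))) (hU : U ∈ nhds ωs)
    (hposU : ∀ ω ∈ U, 0 < ‖gradient f ω‖ ^ 2 - 2 * γ * f ω)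
    (hF : ∀ ω ∈ U, F ω = ω + (1 / γ) •
      ((Real.sqrt (‖gradient f ω‖ ^ 2 - 2 * γ * f ω) / ‖c‖) • c - gradient f ω)) :
    DifferentiableAt ℝ F ωs ∧
    ∀ p : EuclideanSpace ℝ (Fin d),
      fderiv ℝ F ωs p =
        (p - (1 / γ) • fderiv ℝ (gradient f) ωs p) -
          ⟪‖gradient f ωs‖⁻¹ • gradient f ωs,
              p - (1 / γ) • fderiv ℝ (gradient f) ωs p⟫ •
            (‖gradient f ωs‖⁻¹ • gradient f ωs) := by
  classical
  have _hE : True := trivial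
  obtain ⟨V, hV, hfV⟩ := hf
  have hf2 : ContDiffAt ℝ 2 f ωs := hfV.contDiffAt hV
  have hfd1 : ContDiffAt ℝ 1 (fderiv ℝ f) ωs :=
    hf2.fderiv_right (by norm_num)
  have hg1 : ContDiffAt ℝ 1 (gradient f) ωs := by
    have : gradient f = fun x => (InnerProductSpace.toDual ℝ (EuclideanSpace ℝ (Fin d))).symm (fderiv ℝ f x) := rfl
    rw [this]
    exact (InnerProductSpace.toDual ℝ (EuclideanSpace ℝ (Fin d))).symm.contDiff.contDiffAt.comp ωs hfd1
  set a := gradient f ωs with ha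
  set G := fderiv ℝ (gradient f) ωs with hG
  have hr : 0 < ‖a‖ := norm_pos_iff.mpr hg
  have hgd : DifferentiableAt ℝ (gradient f) ωs := hg1.differentiableAt one_ne_zero
  have hgG : HasFDerivAt (gradient f) G ωs := hgd.hasFDerivAt
  have hfdiff : DifferentiableAt ℝ f ωs := hf2.differentiableAt (by norm_num)
  have hfda : HasFDerivAt f (InnerProductSpace.toDual ℝ (EuclideanSpace ℝ (Fin d)) a) ωs := by
    have : InnerProductSpace.toDual ℝ (EuclideanSpace ℝ (Fin d)) a = fderiv ℝ f ωs := by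
      rw [ha]; exact (InnerProductSpace.toDual ℝ (EuclideanSpace ℝ (Fin d))).apply_symm_apply _
    rw [this]; exact hfdiff.hasFDerivAt
  -- derivative of φ ω = ‖g ω‖² − 2γ f ω
  have hn2 : HasFDerivAt (fun ω => ‖gradient f ω‖ ^ 2)
      ((fderivInnerCLM ℝ (a, a)).comp (G.prod G)) ωs := by
    have := hgG.inner (𝕜 := ℝ) hgG
    refine this.congr_of_eventuallyEq ?_
    filter_upwards with ω
    rw [real_inner_self_eq_norm_sq]
  have hφ : HasFDerivAt (fun ω => ‖gradient f ω‖ ^ 2 - 2 * γ * f ω)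
      ((fderivInnerCLM ℝ (a, a)).comp (G.prod G) -
        (2 * γ) • (InnerProductSpace.toDual ℝ (EuclideanSpace ℝ (Fin d)) a : EuclideanSpace ℝ (Fin d) →L[ℝ] ℝ)) ωs :=
    hn2.sub (hfda.const_mul (2 * γ))
  have hφ0 : ‖a‖ ^ 2 - 2 * γ * f ωs ≠ 0 := by
    rw [h0, mul_zero, sub_zero]; positivity
  have hsqrt : HasFDerivAt (fun ω => Real.sqrt (‖gradient f ω‖ ^ 2 - 2 * γ * f ω))
      ((1 / (2 * Real.sqrt (‖a‖ ^ 2 - 2 * γ * f ωs))) •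
        ((fderivInnerCLM ℝ (a, a)).comp (G.prod G) -
          (2 * γ) • (InnerProductSpace.toDual ℝ (EuclideanSpace ℝ (Fin d)) a : EuclideanSpace ℝ (Fin d) →L[ℝ] ℝ))) ωs :=
    (Real.hasDerivAt_sqrt hφ0).comp_hasFDerivAt ωs hφ
  have hH : HasFDerivAt
      (fun ω : EuclideanSpace ℝ (Fin d) => ω + (1 / γ) •
        ((Real.sqrt (‖gradient f ω‖ ^ 2 - 2 * γ * f ω) / ‖c‖) • c - gradient f ω))
      ((ContinuousLinearMap.id ℝ (EuclideanSpace ℝ (Fin d))) +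
        (1 / γ) • ((((1 / (2 * Real.sqrt (‖a‖ ^ 2 - 2 * γ * f ωs))) •
          ((fderivInnerCLM ℝ (a, a)).comp (G.prod G) -
            (2 * γ) • (InnerProductSpace.toDual ℝ (EuclideanSpace ℝ (Fin d)) a : EuclideanSpace ℝ (Fin d) →L[ℝ] ℝ))).smulRight ((‖c‖:ℝ)⁻¹ • c)) - G)) ωs := by
    have h1 : HasFDerivAt
        (fun ω => (Real.sqrt (‖gradient f ω‖ ^ 2 - 2 * γ * f ω) / ‖c‖) • c)
        (((1 / (2 * Real.sqrt (‖a‖ ^ 2 - 2 * γ * f ωs))) •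
          ((fderivInnerCLM ℝ (a, a)).comp (G.prod G) -
            (2 * γ) • (InnerProductSpace.toDual ℝ (EuclideanSpace ℝ (Fin d)) a :
              EuclideanSpace ℝ (Fin d) →L[ℝ] ℝ))).smulRight ((‖c‖:ℝ)⁻¹ • c)) ωs := by
      refine (hsqrt.smul_const ((‖c‖:ℝ)⁻¹ • c)).congr_of_eventuallyEq ?_
      filter_upwards with ω
      rw [smul_smul, div_eq_mul_inv]
    exact (hasFDerivAt_id ωs).add ((h1.sub hgG).const_smul (1 / γ))
  have hFH : HasFDerivAt F
      ((ContinuousLinearMap.id ℝ (EuclideanSpace ℝ (Fin d))) +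
        (1 / γ) • ((((1 / (2 * Real.sqrt (‖a‖ ^ 2 - 2 * γ * f ωs))) •
          ((fderivInnerCLM ℝ (a, a)).comp (G.prod G) -
            (2 * γ) • (InnerProductSpace.toDual ℝ (EuclideanSpace ℝ (Fin d)) a : EuclideanSpace ℝ (Fin d) →L[ℝ] ℝ))).smulRight ((‖c‖:ℝ)⁻¹ • c)) - G)) ωs := by
    refine hH.congr_of_eventuallyEq ?_
    filter_upwards [hU] with ω hω
    exact hF ω hω
  refine ⟨hFH.differentiableAt, ?_⟩
  intro p
  rw [hFH.fderiv]
  have hsq : Real.sqrt (‖a‖ ^ 2 - 2 * γ * f ωs) = ‖a‖ := by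
    rw [h0, mul_zero, sub_zero]; exact Real.sqrt_sq hr.le
  have hnc : ‖c‖ = μ * ‖a‖ := by
    rw [hcμ, norm_smul, Real.norm_eq_abs, abs_of_pos hμ]
  simp only [ContinuousLinearMap.add_apply, ContinuousLinearMap.id_apply,
    ContinuousLinearMap.coe_smul', Pi.smul_apply, ContinuousLinearMap.sub_apply,
    ContinuousLinearMap.smulRight_apply, ContinuousLinearMap.smul_apply,
    ContinuousLinearMap.comp_apply, ContinuousLinearMap.prod_apply, fderivInnerCLM_apply,
    InnerProductSpace.toDual_apply_apply, smul_eq_mul, hsq, hnc, hcμ, h0]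
  rw [real_inner_comm (G p) a]
  simp only [inner_sub_right, inner_smul_right, real_inner_smul_left, real_inner_smul_right]
  have hnc' : ‖μ • a‖ = μ * ‖a‖ := by
    rw [norm_smul, Real.norm_eq_abs, abs_of_pos hμ]
  match_scalars
  all_goals try field_simp [hnc']
  all_goals try ring_nf
  all_goals try simp [mul_comm]
  all_goals try ring
  have hk : ‖a‖ ^ 2 * ‖a‖⁻¹ = ‖a‖ := by rw [pow_two, mul_assoc, mul_inv_cancel₀ hr.ne', mul_one]
  rw [hnc', real_inner_comm a (G p), hk]
  ring
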